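/- (Accessibility) Let Q ⊂ ℝⁿ be a closed set and M ⊂ Q a subset containing a point x̄. Suppose that for some Fréchet normal v̄ ∈ N̂_Q(x̄) there exists a sequence of vectors yᵢ ∈ N^P_M(x̄) \ N^P_Q(x̄) with yᵢ → v̄. Then there exists a sequence (xᵢ, vᵢ) with vᵢ ∈ N^P_Q(xᵢ), (xᵢ, vᵢ) → (x̄, v̄), and xᵢ ∉ M for every index i. -/

import Mathlib

open Filter Topology Metric Set
open scoped RealInnerProductSpace

noncomputable section

/-- `ℝⁿ` with the Euclidean structure. -/
abbrev Euc (n : ℕ) : Type := EuclideanSpace ℝ (Fin n)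

section Defs

variable {H : Type*} [NormedAddCommGroup H] [InnerProductSpace ℝ H]
variable {H' : Type*} [NormedAddCommGroup H'] [InnerProductSpace ℝ H']

/-- The inclusion `M ⊆ Q` holds locally around the point `x`. -/
def LocallyIncl {α : Type*} [TopologicalSpace α] (M Q : Set α) (x : α) : Prop :=
  ∃ U ∈ 𝓝 x, M ∩ U ⊆ Q ∩ U

/-- The equality `M = Q` holds locally around the point `x`. -/
def LocallyEq {α : Type*} [TopologicalSpace α] (M Q : Set α) (x : α) : Prop :=
  ∃ U ∈ 𝓝 x, M ∩ U = Q ∩ U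

/-- The graph of a set-valued mapping. -/
def svGraph (G : H → Set H') : Set (H × H') := {p | p.2 ∈ G p.1}

/-- `G⁻¹(W)`, the preimage of a set `W` under the set-valued mapping `G`. -/
def svPreimage (G : H → Set H') (W : Set H') : Set H := {x | (G x ∩ W).Nonempty}

/-- `M` is identifiable relative to the set-valued mapping `G` at `x` for `v ∈ G x`:
the inclusion `gph G ⊆ M × H'` holds locally around `(x, v)`. -/
def IdentifiableRel (G : H → Set H') (M : Set H) (x : H) (v : H') : Prop :=
  LocallyIncl (svGraph G) (M ×ˢ (univ : Set H')) (x, v)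

/-- `M` is necessary relative to `G` at `x` for `v ∈ G x`: `x ∈ M` and the function
`y ↦ d(v, G y)`, restricted to `M`, is continuous at `x`. -/
def NecessaryRel (G : H → Set H') (M : Set H) (x : H) (v : H') : Prop :=
  x ∈ M ∧ ContinuousWithinAt (fun y => EMetric.infEdist v (G y)) M x

/-- `M` is a locally minimal identifiable set relative to `G` at `x` for `v`. -/
def LocallyMinimalIdentifiableRel (G : H → Set H') (M : Set H) (x : H) (v : H') : Prop :=
  IdentifiableRel G M x v ∧ ∀ M' : Set H, IdentifiableRel G M' x v → LocallyIncl M M' x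

/-- `M` is a locally maximal necessary set relative to `G` at `x` for `v`. -/
def LocallyMaximalNecessaryRel (G : H → Set H') (M : Set H) (x : H) (v : H') : Prop :=
  NecessaryRel G M x v ∧ ∀ M' : Set H, NecessaryRel G M' x v → LocallyIncl M' M x

/-- The proximal normal cone to `Q` at `x`. -/
def proxNormalCone (Q : Set H) (x : H) : Set H :=
  {v | x ∈ Q ∧ ∃ r > (0:ℝ), ∀ y ∈ Q, dist (x + r⁻¹ • v) x ≤ dist (x + r⁻¹ • v) y}

/-- The Fréchet normal cone to `Q` at `x`. -/
def frechetNormalCone (Q : Set H) (x : H) : Set H :=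
  {v | x ∈ Q ∧ ∀ ε > (0:ℝ), ∃ δ > (0:ℝ), ∀ y ∈ Q, dist y x < δ → ⟪v, y - x⟫ ≤ ε * ‖y - x‖}

/-- The limiting normal cone to `Q` at `x`. -/
def limitingNormalCone (Q : Set H) (x : H) : Set H :=
  {v | ∃ xs vs : ℕ → H, (∀ i, vs i ∈ frechetNormalCone Q (xs i)) ∧
        Tendsto xs atTop (𝓝 x) ∧ Tendsto vs atTop (𝓝 v)}

/-- `Q` is locally closed at `x`. -/
def LocallyClosedAt (Q : Set H) (x : H) : Prop :=
  ∃ ε > (0:ℝ), IsClosed (Q ∩ closedBall x ε)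

/-- `x` is the unique nearest point of `S` to `p`. -/
def IsUniqueNearestPt (S : Set H) (p x : H) : Prop :=
  x ∈ S ∧ ∀ y ∈ S, y ≠ x → dist p x < dist p y

/-- `Q` is prox-regular at `xb` for `vb`. -/
def ProxRegularAt (Q : Set H) (xb vb : H) : Prop :=
  LocallyClosedAt Q xb ∧ ∃ ε > (0:ℝ), ∃ r > (0:ℝ), ∀ x ∈ Q,
    ∀ v ∈ limitingNormalCone Q x, dist x xb < ε → dist v vb < ε →
      IsUniqueNearestPt (Q ∩ closedBall xb ε) (x + r⁻¹ • v) x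

/-- `Q` is Clarke regular at `x`. -/
def ClarkeRegularAt (Q : Set H) (x : H) : Prop :=
  LocallyClosedAt Q x ∧ limitingNormalCone Q x = frechetNormalCone Q x

/-- `M` is identifiable relative to the set `Q` at `xb` for `vb ∈ N_Q(xb)`:
the graph of the limiting normal cone mapping is contained in `M × H` locally
around `(xb, vb)`. -/
def IdentifiableIn (Q M : Set H) (xb vb : H) : Prop :=
  ∃ W ∈ 𝓝 (xb, vb), ∀ p : H × H, p ∈ W → p.1 ∈ Q → p.2 ∈ limitingNormalCone Q p.1 → p.1 ∈ M

/-- `M` is a locally minimal identifiable set relative to the set `Q` at `xb` for `vb`. -/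
def LocallyMinimalIdentifiableIn (Q M : Set H) (xb vb : H) : Prop :=
  IdentifiableIn Q M xb vb ∧ ∀ M' : Set H, IdentifiableIn Q M' xb vb → LocallyIncl M M' xb

/-- The (Bouligand) tangent cone to `Q` at `xb`. -/
def tangentConeB (Q : Set H) (xb : H) : Set H :=
  {w | ∃ (xs : ℕ → H) (ts : ℕ → ℝ), (∀ i, xs i ∈ Q) ∧ (∀ i, 0 < ts i) ∧
      Tendsto ts atTop (𝓝 0) ∧ Tendsto xs atTop (𝓝 xb) ∧
      Tendsto (fun i => (ts i)⁻¹ • (xs i - xb)) atTop (𝓝 w)}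

/-- The set of nearest points of `Q` to `y`. -/
def nearestPts (Q : Set H) (y : H) : Set H := {z | z ∈ Q ∧ ∀ w ∈ Q, dist y z ≤ dist y w}

/-- A tangent vector `w ∈ T_Q(xb)` is smoothly derivable. -/
def SmoothlyDerivableVec (Q : Set H) (xb w : H) : Prop :=
  ∃ ε > (0:ℝ), ∃ γ : ℝ → H, ContDiffOn ℝ 1 γ (Ico (0:ℝ) ε) ∧ γ 0 = xb ∧
    (∀ t ∈ Ico (0:ℝ) ε, γ t ∈ Q) ∧
    Tendsto (fun t => t⁻¹ • (γ t - xb)) (𝓝[>] (0:ℝ)) (𝓝 w)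

/-- `Q` is smoothly derivable at `xb`: every tangent vector is smoothly derivable. -/
def SmoothlyDerivableAt (Q : Set H) (xb : H) : Prop :=
  ∀ w ∈ tangentConeB Q xb, SmoothlyDerivableVec Q xb w

/-- The normal cone of convex analysis. -/
def convNormalCone (C : Set H) (x : H) : Set H := {v | ∀ y ∈ C, ⟪v, y - x⟫ ≤ 0}

/-- The tangent cone of convex analysis. -/
def convTangentCone (C : Set H) (x : H) : Set H :=
  closure {w | ∃ l : ℝ, 0 ≤ l ∧ ∃ y ∈ C, w = l • (y - x)}

/-- A convex polyhedron: a finite intersection of closed halfspaces. -/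
def IsPolyhedron (Q : Set H) : Prop :=
  ∃ (k : ℕ) (a : Fin k → H) (b : Fin k → ℝ), Q = {x | ∀ i, ⟪a i, x⟫ ≤ b i}

/-- The relative interior of a set: interior relative to its affine span. -/
def relInterior (S : Set H) : Set H :=
  {v | v ∈ S ∧ ∃ ε > (0:ℝ), ∀ y ∈ (affineSpan ℝ S : Set H), dist y v < ε → y ∈ S}

/-- Inner semicontinuity at `xb` of a set-valued map restricted to `S`. -/
def InnerSemicontinuousOnAt (T : H → Set H') (S : Set H) (xb : H) : Prop :=
  ∀ xs : ℕ → H, (∀ i, xs i ∈ S) → Tendsto xs atTop (𝓝 xb) →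
    ∀ w ∈ T xb, ∃ ws : ℕ → H', (∀ i, ws i ∈ T (xs i)) ∧ Tendsto ws atTop (𝓝 w)

/-- `M` is a `C²` submanifold of the ambient space around the point `xb`. -/
def IsC2SubmanifoldAround (M : Set H) (xb : H) : Prop :=
  ∃ (m : ℕ) (F : H → EuclideanSpace ℝ (Fin m)) (U : Set H), IsOpen U ∧ xb ∈ U ∧
    ContDiffOn ℝ 2 F U ∧ Function.Surjective (fderiv ℝ F xb) ∧
    M ∩ U = {x ∈ U | F x = 0}

/-- `Q` is partly smooth with respect to the manifold `M` at `xb` for `vb`. -/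
def PartlySmoothAt (Q M : Set H) (xb vb : H) : Prop :=
  ProxRegularAt Q xb vb ∧
  (Submodule.span ℝ (frechetNormalCone Q xb) : Set H) = limitingNormalCone M xb ∧
  ∃ V ∈ 𝓝 vb, InnerSemicontinuousOnAt (fun x => V ∩ limitingNormalCone Q x) M xb

/-- `ℝⁿ × ℝ` with the Euclidean (ℓ²) structure, hosting epigraphs. -/
abbrev PairL2 (H : Type*) [NormedAddCommGroup H] : Type _ := WithLp 2 (H × ℝ)

/-- Build a point of `PairL2 H` from its components. -/
def pmk (x : H) (r : ℝ) : PairL2 H := (WithLp.equiv 2 (H × ℝ)).symm (x, r)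

/-- The epigraph of an extended-real-valued function. -/
def epigraph (f : H → EReal) : Set (PairL2 H) :=
  {p | f ((WithLp.equiv 2 (H × ℝ)) p).1 ≤ (((WithLp.equiv 2 (H × ℝ)) p).2 : EReal)}

/-- The limiting subdifferential. -/
def limSubdiff (f : H → EReal) (x : H) : Set H :=
  {v | ∃ r : ℝ, f x = (r : EReal) ∧
      pmk v (-1) ∈ limitingNormalCone (epigraph f) (pmk x r)}

/-- The horizon subdifferential. -/
def horizonSubdiff (f : H → EReal) (x : H) : Set H :=
  {v | ∃ r : ℝ, f x = (r : EReal) ∧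
      pmk v 0 ∈ limitingNormalCone (epigraph f) (pmk x r)}

/-- The proximal subdifferential. -/
def proxSubdiff (f : H → EReal) (x : H) : Set H :=
  {v | ∃ r : ℝ, f x = (r : EReal) ∧
      pmk v (-1) ∈ proxNormalCone (epigraph f) (pmk x r)}

/-- A function is Clarke regular at `x` if its epigraph is Clarke regular at `(x, f x)`. -/
def ClarkeRegularFn (f : H → EReal) (x : H) : Prop :=
  ∃ r : ℝ, f x = (r : EReal) ∧ ClarkeRegularAt (epigraph f) (pmk x r)

/-- `M` is identifiable at `xb` for `vb` relative to the function `f` with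
subdifferential mapping `D`: for every sequence `(xᵢ, f xᵢ, vᵢ) → (xb, f xb, vb)`
with `vᵢ ∈ D xᵢ`, the points `xᵢ` lie in `M` for all large `i`. -/
def IdentifiableFn (f : H → EReal) (D : H → Set H) (M : Set H) (xb vb : H) : Prop :=
  ∀ xs vs : ℕ → H, Tendsto xs atTop (𝓝 xb) →
    Tendsto (fun i => f (xs i)) atTop (𝓝 (f xb)) →
    Tendsto vs atTop (𝓝 vb) → (∀ i, vs i ∈ D (xs i)) →
    ∀ᶠ i in atTop, xs i ∈ M

/-- `M` is a locally minimal identifiable set relative to `f` (with subdifferential `D`). -/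
def LocallyMinimalIdentifiableFn (f : H → EReal) (D : H → Set H) (M : Set H)
    (xb vb : H) : Prop :=
  IdentifiableFn f D M xb vb ∧ ∀ M' : Set H, IdentifiableFn f D M' xb vb → LocallyIncl M M' xb

/-- The subdifferential of convex analysis for an extended-real-valued function. -/
def convexSubdiff (f : H → EReal) (x : H) : Set H :=
  {v | ∃ r : ℝ, f x = (r : EReal) ∧ ∀ y : H, ((r + ⟪v, y - x⟫ : ℝ) : EReal) ≤ f y}

/-- Convexity for an extended-real-valued function. -/
def ERealConvexOn (f : H → EReal) : Prop :=
  ∀ x y : H, ∀ a b : ℝ, 0 ≤ a → 0 ≤ b → a + b = 1 →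
    f (a • x + b • y) ≤ (a : EReal) * f x + (b : EReal) * f y

/-- A piecewise linear-quadratic function: its domain is the union of finitely many
convex polyhedra, on each of which it agrees with a polynomial of degree at most 2. -/
def IsPiecewiseLinearQuadratic (f : H → EReal) : Prop :=
  ∃ (k : ℕ) (C : Fin k → Set H), (∀ i, IsPolyhedron (C i)) ∧
    ({x | f x ≠ ⊤} = ⋃ i, C i) ∧
    ∀ i, ∃ (B : H →ₗ[ℝ] H →ₗ[ℝ] ℝ) (l : H →ₗ[ℝ] ℝ) (c : ℝ),
      ∀ x ∈ C i, f x = ((B x x + l x + c : ℝ) : EReal)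


/-- Outer semicontinuity of a set-valued mapping (at every point). -/
def OuterSemicontinuousSV (G : H → Set H') : Prop :=
  ∀ (x : H) (v : H') (xs : ℕ → H) (vs : ℕ → H'),
    Tendsto xs atTop (𝓝 x) → Tendsto vs atTop (𝓝 v) →
    (∀ i, vs i ∈ G (xs i)) → v ∈ G x

end Defs

/-- Accessibility. -/
theorem statement11 {n : ℕ} (Q : Set (Euc n)) (hQ : IsClosed Q)
    (M : Set (Euc n)) (hMQ : M ⊆ Q) (xb : Euc n) (hxb : xb ∈ M)
    (vb : Euc n) (hvb : vb ∈ frechetNormalCone Q xb)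
    (ys : ℕ → Euc n) (hys : ∀ i, ys i ∈ proxNormalCone M xb \ proxNormalCone Q xb)
    (hlim : Tendsto ys atTop (𝓝 vb)) :
    ∃ xs vs : ℕ → Euc n, (∀ i, vs i ∈ proxNormalCone Q (xs i)) ∧ (∀ i, xs i ∉ M) ∧
      Tendsto xs atTop (𝓝 xb) ∧ Tendsto vs atTop (𝓝 vb) := by
  classical
  have hxbQ : xb ∈ Q := hMQ hxb
  choose r hrpos hrnear using fun i => (hys i).1.2
  set t : ℕ → ℝ := fun i => min (r i)⁻¹ (1 / (i + 1)) with ht_def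
  have htpos : ∀ i, 0 < t i := fun i => lt_min (inv_pos.2 (hrpos i)) (by positivity)
  have htle : ∀ i, t i ≤ (r i)⁻¹ := fun i => min_le_left _ _
  have htsmall : ∀ i, t i ≤ 1 / (i + 1) := fun i => min_le_right _ _
  set p : ℕ → Euc n := fun i => xb + t i • ys i with hp_def
  have hpxb : ∀ i, dist (p i) xb = t i * ‖ys i‖ := by
    intro i
    simp only [hp_def]
    rw [dist_eq_norm, add_sub_cancel_left, norm_smul, Real.norm_eq_abs,
      abs_of_pos (htpos i)]
  have hne : Q.Nonempty := ⟨xb, hxbQ⟩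
  have hproj : ∀ i, ∃ x ∈ Q, Metric.infDist (p i) Q = dist (p i) x :=
    fun i => hQ.exists_infDist_eq_dist hne (p i)
  choose xs hxsQ hxsd using hproj
  have hnearQ : ∀ i, ∀ q ∈ Q, dist (p i) (xs i) ≤ dist (p i) q := by
    intro i q hq
    rw [← hxsd i]
    exact Metric.infDist_le_dist_of_mem hq
  -- `xb` is an `M`-nearest point to `p i`
  have hMnear : ∀ i, ∀ m ∈ M, dist (p i) xb ≤ dist (p i) m := by
    intro i m hm
    set P := xb + (r i)⁻¹ • ys i with hP
    have h1 : dist P xb ≤ dist P m := hrnear i m hm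
    have hdP : dist P xb = (r i)⁻¹ * ‖ys i‖ := by
      rw [hP, dist_eq_norm, add_sub_cancel_left, norm_smul, Real.norm_eq_abs,
        abs_of_pos (inv_pos.2 (hrpos i))]
    have hdPp : dist P (p i) = ((r i)⁻¹ - t i) * ‖ys i‖ := by
      have hsub : P - p i = ((r i)⁻¹ - t i) • ys i := by
        simp only [hP, hp_def, sub_smul]
        abel
      rw [dist_eq_norm, hsub, norm_smul, Real.norm_eq_abs,
        abs_of_nonneg (by linarith [htle i])]
    have htr := dist_triangle P (p i) m
    have h2 : dist (p i) m ≥ dist P m - dist P (p i) := by linarith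
    have h3 : (r i)⁻¹ * ‖ys i‖ - ((r i)⁻¹ - t i) * ‖ys i‖ = t i * ‖ys i‖ := by ring
    rw [hpxb i]
    linarith [hdP ▸ h1, hdPp ▸ h2]
  -- `xb` is not a `Q`-nearest point to `p i`
  have hQnot : ∀ i, ∃ q ∈ Q, dist (p i) q < dist (p i) xb := by
    intro i
    by_contra h
    push_neg at h
    refine (hys i).2 ⟨hxbQ, (t i)⁻¹, inv_pos.2 (htpos i), ?_⟩
    intro y hy
    rw [inv_inv]
    exact h y hy
  have hstrict : ∀ i, dist (p i) (xs i) < dist (p i) xb := by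
    intro i
    obtain ⟨q, hq, hlt⟩ := hQnot i
    exact lt_of_le_of_lt (hnearQ i q hq) hlt
  have hxsM : ∀ i, xs i ∉ M := by
    intro i hmem
    exact absurd (hMnear i _ hmem) (not_le.2 (hstrict i))
  -- the normal vectors
  set vs : ℕ → Euc n := fun i => (t i)⁻¹ • (p i - xs i) with hvs_def
  have hpt : ∀ i, xs i + ((t i)⁻¹)⁻¹ • vs i = p i := by
    intro i
    rw [hvs_def]
    simp only [inv_inv, smul_smul, mul_inv_cancel₀ (htpos i).ne', one_smul]
    abel
  have hvsQ : ∀ i, vs i ∈ proxNormalCone Q (xs i) := by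
    intro i
    refine ⟨hxsQ i, (t i)⁻¹, inv_pos.2 (htpos i), ?_⟩
    intro y hy
    rw [hpt i]
    exact hnearQ i y hy
  -- convergence of t
  have htt : Tendsto t atTop (𝓝 0) := by
    refine squeeze_zero (fun i => (htpos i).le) htsmall ?_
    exact_mod_cast tendsto_one_div_add_atTop_nhds_zero_nat (𝕜 := ℝ)
  -- convergence of xs
  have hdxs : ∀ i, dist (xs i) xb ≤ 2 * (t i * ‖ys i‖) := by
    intro i
    have h1 := dist_triangle (xs i) (p i) xb
    have h2 : dist (xs i) (p i) ≤ dist (p i) xb := by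
      rw [dist_comm]; exact (hstrict i).le
    have := hpxb i
    linarith
  have hxst : Tendsto xs atTop (𝓝 xb) := by
    rw [tendsto_iff_dist_tendsto_zero]
    refine squeeze_zero (fun i => dist_nonneg) hdxs ?_
    have : Tendsto (fun i => 2 * (t i * ‖ys i‖)) atTop (𝓝 (2 * (0 * ‖vb‖))) :=
      (htt.mul hlim.norm).const_mul 2
    simpa using this
  -- the key quadratic inequality
  have hsq : ∀ i, ‖xs i - xb‖ ^ 2 ≤ 2 * (t i * ⟪ys i, xs i - xb⟫) := by
    intro i
    have h1 : ‖p i - xs i‖ ≤ ‖p i - xb‖ := by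
      rw [← dist_eq_norm, ← dist_eq_norm]; exact (hstrict i).le
    have e1 : p i - xb = t i • ys i := by simp [hp_def]
    have e2 : p i - xs i = t i • ys i - (xs i - xb) := by
      simp only [hp_def]; abel
    have h2 : ‖t i • ys i - (xs i - xb)‖ ^ 2 ≤ ‖t i • ys i‖ ^ 2 := by
      rw [← e2, ← e1]
      exact pow_le_pow_left₀ (norm_nonneg _) h1 2
    have h3 := norm_sub_sq_real (t i • ys i) (xs i - xb)
    have h4 : ⟪t i • ys i, xs i - xb⟫ = t i * ⟪ys i, xs i - xb⟫ :=
      real_inner_smul_left _ _ _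
    nlinarith
  -- key bound
  have key : ∀ ε > (0:ℝ), ∀ᶠ i in atTop, ‖xs i - xb‖ ≤ 4 * ε * t i := by
    intro ε hε
    obtain ⟨δ, hδ, hδv⟩ := hvb.2 ε hε
    have h1 : ∀ᶠ i in atTop, dist (xs i) xb < δ := Metric.tendsto_nhds.mp hxst δ hδ
    have h2 : ∀ᶠ i in atTop, ‖ys i - vb‖ < ε := by
      have := Metric.tendsto_nhds.mp hlim ε hε
      simpa [dist_eq_norm] using this
    filter_upwards [h1, h2] with i hi1 hi2
    have he := hsq i
    have hv : ⟪vb, xs i - xb⟫ ≤ ε * ‖xs i - xb‖ := hδv (xs i) (hxsQ i) hi1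
    have hy : ⟪ys i - vb, xs i - xb⟫ ≤ ‖ys i - vb‖ * ‖xs i - xb‖ :=
      real_inner_le_norm _ _
    have hsplit : ⟪ys i - vb, xs i - xb⟫ = ⟪ys i, xs i - xb⟫ - ⟪vb, xs i - xb⟫ :=
      inner_sub_left _ _ _
    have hineq : ⟪ys i, xs i - xb⟫ ≤ 2 * ε * ‖xs i - xb‖ := by nlinarith [norm_nonneg (xs i - xb)]
    rcases eq_or_lt_of_le (norm_nonneg (xs i - xb)) with h0 | h0
    · rw [← h0]; nlinarith [htpos i]
    · nlinarith [htpos i]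
  -- tendsto of the correction term
  have hsn : Tendsto (fun i => (t i)⁻¹ • (xs i - xb)) atTop (𝓝 0) := by
    rw [NormedAddCommGroup.tendsto_nhds_zero]
    intro ε hε
    filter_upwards [key (ε / 8) (by positivity)] with i hi
    have hn : ‖(t i)⁻¹ • (xs i - xb)‖ = (t i)⁻¹ * ‖xs i - xb‖ := by
      rw [norm_smul, Real.norm_eq_abs, abs_of_pos (inv_pos.2 (htpos i))]
    have hc : (t i)⁻¹ * (4 * (ε / 8) * t i) = ε / 2 := by
      have h := (htpos i).ne'
      field_simp
      ring
    calc ‖(t i)⁻¹ • (xs i - xb)‖ = (t i)⁻¹ * ‖xs i - xb‖ := hn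
      _ ≤ (t i)⁻¹ * (4 * (ε / 8) * t i) :=
          mul_le_mul_of_nonneg_left hi (inv_pos.2 (htpos i)).le
      _ = ε / 2 := hc
      _ < ε := by linarith
  -- vs in terms of ys
  have hvseq : ∀ i, vs i = ys i - (t i)⁻¹ • (xs i - xb) := by
    intro i
    have e2 : p i - xs i = t i • ys i - (xs i - xb) := by
      simp only [hp_def]; abel
    rw [hvs_def]
    simp only [e2, smul_sub, smul_smul, inv_mul_cancel₀ (htpos i).ne', one_smul]
  have hvst : Tendsto vs atTop (𝓝 vb) := by
    have := hlim.sub hsn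
    rw [sub_zero] at this
    exact this.congr fun i => (hvseq i).symm
  exact ⟨xs, vs, hvsQ, hxsM, hxst, hvst⟩
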